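/- Equality holds in the discrete Wirtinger inequality (∑_{k=0}^{n-1}(ψ_{k+1}−ψ_k)² = 4 sin²(π/n) ∑_{k=0}^{n-1} ψ_k², with ψ₀=ψₙ, ∑ψ_k=0) if and only if there exist A, B ∈ ℝ such that ψ_k = A cos(2πk/n) + B sin(2πk/n) for all k. -/

import Mathlib

open Real Finset
open scoped RealInnerProductSpace

abbrev E2 := EuclideanSpace ℝ (Fin 2)

/-- Rotation by π/2 in the plane. -/
noncomputable def Rot (v : E2) : E2 :=
  (WithLp.equiv 2 (Fin 2 → ℝ)).symm ![-v 1, v 0]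

/-- Rotation by angle θ in the plane. -/
noncomputable def RotBy (θ : ℝ) (v : E2) : E2 :=
  (WithLp.equiv 2 (Fin 2 → ℝ)).symm
    ![Real.cos θ * v 0 - Real.sin θ * v 1, Real.sin θ * v 0 + Real.cos θ * v 1]

/-! ### Discrete Fourier analysis toolkit -/

noncomputable def ffc (n : ℕ) (m : ℤ) : ℂ := Complex.exp (2 * Real.pi * Complex.I * m / n)

lemma ffc_add (n : ℕ) (a b : ℤ) : ffc n (a + b) = ffc n a * ffc n b := by
  rw [ffc, ffc, ffc, ← Complex.exp_add]
  congr 1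
  push_cast
  ring

lemma ffc_zero (n : ℕ) : ffc n 0 = 1 := by simp [ffc]

lemma ffc_mul_nat (n : ℕ) (m : ℤ) (k : ℕ) : ffc n (m * k) = ffc n m ^ k := by
  induction k with
  | zero => simp [ffc_zero]
  | succ k ih => rw [pow_succ, ← ih, ← ffc_add]; congr 1; push_cast; ring

lemma ffc_eq_one_iff (n : ℕ) (hn : 0 < n) (m : ℤ) : ffc n m = 1 ↔ (n : ℤ) ∣ m := by
  rw [ffc, Complex.exp_eq_one_iff]
  constructor
  · rintro ⟨k, hk⟩
    refine ⟨k, ?_⟩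
    have hn' : (n : ℂ) ≠ 0 := by exact_mod_cast Nat.cast_ne_zero.mpr hn.ne'
    have hπ : (2 : ℂ) * Real.pi * Complex.I ≠ 0 := by
      simp [Real.pi_ne_zero, Complex.I_ne_zero]
    field_simp at hk
    have : (m : ℂ) = n * k := by
      apply mul_left_cancel₀ hπ
      rw [hk]
    exact_mod_cast this
  · rintro ⟨k, rfl⟩
    refine ⟨k, ?_⟩
    have hn' : (n : ℂ) ≠ 0 := by exact_mod_cast Nat.cast_ne_zero.mpr hn.ne'
    field_simp
    push_cast
    ring

lemma ffc_orth (n : ℕ) (hn : 0 < n) (m : ℤ) :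
    ∑ k ∈ range n, ffc n (m * k) = if (n : ℤ) ∣ m then (n : ℂ) else 0 := by
  by_cases h : (n : ℤ) ∣ m
  · simp only [h, if_true]
    have h1 : ffc n m = 1 := (ffc_eq_one_iff n hn m).mpr h
    simp [ffc_mul_nat, h1]
  · simp only [h, if_false]
    have h1 : ffc n m ≠ 1 := fun hc => h ((ffc_eq_one_iff n hn m).mp hc)
    have key : ∑ k ∈ range n, ffc n m ^ k = (ffc n m ^ n - 1) / (ffc n m - 1) :=
      geom_sum_eq h1 n
    have hpow : ffc n m ^ n = 1 := by
      rw [← ffc_mul_nat]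
      exact (ffc_eq_one_iff n hn (m * n)).mpr ⟨m, by ring⟩
    simp only [ffc_mul_nat]
    rw [key, hpow]
    simp

lemma conj_ffc (n : ℕ) (m : ℤ) : (starRingEnd ℂ) (ffc n m) = ffc n (-m) := by
  rw [ffc, ffc, ← Complex.exp_conj]
  congr 1
  simp only [map_div₀, map_mul, Complex.conj_I, Complex.conj_ofReal, map_ofNat,
    Complex.conj_natCast, map_intCast]
  push_cast
  ring

lemma dvd_iff_eq (n k l : ℕ) (hk : k < n) (hl : l < n) :
    (n : ℤ) ∣ ((k : ℤ) - l) ↔ k = l := by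
  constructor
  · intro h
    have h1 : ((k : ℤ) - l) = 0 := by
      rcases h with ⟨c, hc⟩
      have hn0 : (0:ℤ) < n := by omega
      rcases lt_trichotomy c 0 with h' | h' | h'
      · nlinarith
      · simp [hc, h']
      · nlinarith
    omega
  · rintro rfl; simp

noncomputable def Fc (n : ℕ) (φ : ℕ → ℝ) (j : ℕ) : ℂ :=
  ∑ k ∈ range n, (φ k : ℂ) * ffc n (j * k)

lemma parseval (n : ℕ) (hn : 0 < n) (φ : ℕ → ℝ) :
    ∑ j ∈ range n, Complex.normSq (Fc n φ j) = n * ∑ k ∈ range n, (φ k)^2 := by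
  have key : ∑ j ∈ range n, (Fc n φ j * (starRingEnd ℂ) (Fc n φ j))
      = (n : ℂ) * ∑ k ∈ range n, ((φ k : ℂ))^2 := by
    have hconj : ∀ j : ℕ, (starRingEnd ℂ) (Fc n φ j)
        = ∑ l ∈ range n, (φ l : ℂ) * ffc n (-((j:ℤ) * l)) := by
      intro j
      rw [Fc, map_sum]
      refine Finset.sum_congr rfl fun l _ => ?_
      rw [map_mul, Complex.conj_ofReal, conj_ffc]
    calc ∑ j ∈ range n, (Fc n φ j * (starRingEnd ℂ) (Fc n φ j))
        = ∑ j ∈ range n, ∑ k ∈ range n, ∑ l ∈ range n,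
            (φ k : ℂ) * (φ l : ℂ) * ffc n (((k:ℤ) - l) * j) := by
          refine Finset.sum_congr rfl fun j _ => ?_
          rw [hconj, Fc, Finset.sum_mul_sum]
          refine Finset.sum_congr rfl fun k _ => Finset.sum_congr rfl fun l _ => ?_
          rw [mul_mul_mul_comm, ← ffc_add]
          congr 1
          ring
      _ = ∑ k ∈ range n, ∑ l ∈ range n, (φ k : ℂ) * (φ l : ℂ) *
            ∑ j ∈ range n, ffc n (((k:ℤ) - l) * j) := by
          rw [Finset.sum_comm]
          refine Finset.sum_congr rfl fun k _ => ?_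
          rw [Finset.sum_comm]
          refine Finset.sum_congr rfl fun l _ => ?_
          rw [Finset.mul_sum]
      _ = ∑ k ∈ range n, ∑ l ∈ range n, (φ k : ℂ) * (φ l : ℂ) *
            (if k = l then (n:ℂ) else 0) := by
          refine Finset.sum_congr rfl fun k hk => Finset.sum_congr rfl fun l hl => ?_
          rw [ffc_orth n hn]
          congr 1
          simp [dvd_iff_eq n k l (mem_range.mp hk) (mem_range.mp hl)]
      _ = (n:ℂ) * ∑ k ∈ range n, ((φ k : ℂ))^2 := by
          rw [Finset.mul_sum]
          refine Finset.sum_congr rfl fun k hk => ?_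
          simp only [mul_ite, mul_zero]
          rw [Finset.sum_ite_eq (range n) k]
          simp only [hk, if_true]
          ring
  have key2 : ((∑ j ∈ range n, Complex.normSq (Fc n φ j) : ℝ) : ℂ)
      = (((n : ℝ) * ∑ k ∈ range n, (φ k)^2 : ℝ) : ℂ) := by
    push_cast
    rw [← key]
    refine Finset.sum_congr rfl fun j _ => ?_
    rw [Complex.mul_conj]
  exact_mod_cast key2

lemma sum_shift (n : ℕ) (g : ℕ → ℂ) :
    ∑ k ∈ range n, g (k+1) = ∑ k ∈ range n, g k + g n - g 0 := by
  have h1 := Finset.sum_range_succ g n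
  have h2 := Finset.sum_range_succ' g n
  rw [h2] at h1
  linear_combination h1

lemma ffc_neg_mul (n : ℕ) (j : ℤ) : ffc n (-j) * ffc n j = 1 := by
  rw [← ffc_add]; simp [ffc_zero]

lemma shift (n : ℕ) (hn : 0 < n) (ψ : ℕ → ℝ) (hper : ψ 0 = ψ n) (j : ℕ) :
    Fc n (fun k => ψ (k+1) - ψ k) j = (ffc n (-(j:ℤ)) - 1) * Fc n ψ j := by
  set g : ℕ → ℂ := fun k => (ψ k : ℂ) * ffc n ((j:ℤ) * (k:ℤ)) with hg
  have hFc : Fc n ψ j = ∑ k ∈ range n, g k := rfl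
  have hfn : ffc n ((j:ℤ) * (n:ℤ)) = 1 := (ffc_eq_one_iff n hn _).mpr ⟨j, by ring⟩
  have key : ∀ k : ℕ, ((ψ (k+1) - ψ k : ℝ) : ℂ) * ffc n ((j:ℤ) * (k:ℤ))
      = ffc n (-(j:ℤ)) * g (k+1) - g k := by
    intro k
    simp only [hg]
    rw [show ((j:ℤ) * ((k+1 : ℕ):ℤ)) = (j:ℤ)*(k:ℤ) + j by push_cast; ring, ffc_add]
    have h := ffc_neg_mul n (j : ℤ)
    push_cast
    linear_combination (-(((ψ (k+1) : ℝ) : ℂ) * ffc n ((j:ℤ) * (k:ℤ)))) * h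
  have hsum : ∑ k ∈ range n, g (k+1) = Fc n ψ j := by
    rw [sum_shift, hFc]
    simp only [hg, Nat.cast_zero, mul_zero, ffc_zero, hfn, hper, mul_one]
    ring
  have hmain : Fc n (fun k => ψ (k+1) - ψ k) j
      = ∑ k ∈ range n, (ffc n (-(j:ℤ)) * g (k+1) - g k) := by
    rw [Fc]
    exact Finset.sum_congr rfl fun k _ => key k
  rw [hmain, Finset.sum_sub_distrib, ← Finset.mul_sum, hsum, hFc]
  ring

lemma normSq_ffc_sub_one (n : ℕ) (j : ℕ) :
    Complex.normSq (ffc n (-(j:ℤ)) - 1) = 4 * Real.sin (π * j / n)^2 := by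
  have harg : (2 * (π:ℝ) * Complex.I * ((-(j:ℤ) : ℤ) : ℂ) / n : ℂ)
      = ((-(2*(π*(j:ℝ)/n)) : ℝ) : ℂ) * Complex.I := by push_cast; ring
  rw [ffc, harg, Complex.exp_mul_I, ← Complex.ofReal_cos, ← Complex.ofReal_sin]
  have hz : (↑(Real.cos (-(2*(π*(j:ℝ)/n)))) + ↑(Real.sin (-(2*(π*(j:ℝ)/n)))) * Complex.I - 1 : ℂ)
      = ↑(Real.cos (-(2*(π*(j:ℝ)/n))) - 1) + ↑(Real.sin (-(2*(π*(j:ℝ)/n)))) * Complex.I := by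
    push_cast; ring
  rw [hz, Complex.normSq_add_mul_I, Real.cos_neg, Real.sin_neg]
  set t := π * (j:ℝ) / n with ht
  have h1 := Real.sin_sq_add_cos_sq (2*t)
  have h2 := Real.cos_two_mul t
  have h3 := Real.sin_sq_add_cos_sq t
  nlinarith [h1, h2, h3]

lemma sin_ge_sin (a x : ℝ) (ha : 0 < a) (h1 : a ≤ x) (h2 : x ≤ π - a) :
    Real.sin a ≤ Real.sin x := by
  rcases le_or_gt x (π/2) with h | h
  · exact ((Real.strictMonoOn_sin).monotoneOn ⟨by linarith, by linarith⟩ ⟨by linarith, h⟩ h1)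
  · rw [← Real.sin_pi_sub x]
    exact ((Real.strictMonoOn_sin).monotoneOn ⟨by linarith, by linarith⟩
      ⟨by linarith, by linarith⟩ (by linarith))

lemma sin_gt_sin (a x : ℝ) (ha : 0 < a) (h1 : a < x) (h2 : x < π - a) :
    Real.sin a < Real.sin x := by
  rcases le_or_gt x (π/2) with h | h
  · exact Real.strictMonoOn_sin ⟨by linarith, by linarith⟩ ⟨by linarith, h⟩ h1
  · rw [← Real.sin_pi_sub x]
    exact Real.strictMonoOn_sin ⟨by linarith, by linarith⟩ ⟨by linarith, by linarith⟩ (by linarith)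

lemma int_dvd_small (n m : ℤ) (h1 : -n < m) (h2 : m < n) (hd : n ∣ m) : m = 0 := by
  rcases hd with ⟨c, rfl⟩
  have hn : 0 < n := by nlinarith
  rcases lt_trichotomy c 0 with h | h | h
  · nlinarith
  · simp [h]
  · nlinarith

lemma ffc_real (n : ℕ) (k : ℕ) :
    ffc n (k:ℤ) = ↑(Real.cos (2*π*k/n)) + ↑(Real.sin (2*π*k/n)) * Complex.I := by
  rw [ffc, show (2*(π:ℝ)*Complex.I*(((k:ℤ)):ℂ)/n : ℂ) = ((2*π*(k:ℝ)/n : ℝ):ℂ) * Complex.I by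
    push_cast; ring, Complex.exp_mul_I, ← Complex.ofReal_cos, ← Complex.ofReal_sin]

lemma ffc_real_neg (n : ℕ) (k : ℕ) :
    ffc n (-(k:ℤ)) = ↑(Real.cos (2*π*k/n)) - ↑(Real.sin (2*π*k/n)) * Complex.I := by
  rw [ffc, show (2*(π:ℝ)*Complex.I*(((-(k:ℤ)):ℤ):ℂ)/n : ℂ) = ((-(2*π*(k:ℝ)/n) : ℝ):ℂ) * Complex.I by
    push_cast; ring, Complex.exp_mul_I, ← Complex.ofReal_cos, ← Complex.ofReal_sin,
    Real.cos_neg, Real.sin_neg]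
  push_cast; ring

lemma Fc_trig (n : ℕ) (hn3 : 3 ≤ n) (A B : ℝ) (j : ℕ) (hj : j < n) :
    Fc n (fun k => A * Real.cos (2*π*k/n) + B * Real.sin (2*π*k/n)) j
      = if j = 1 then ((n:ℂ)/2) * (A + B*Complex.I)
        else if j = n-1 then ((n:ℂ)/2) * (A - B*Complex.I) else 0 := by
  have hn : 0 < n := by omega
  have hsplit : ∀ k : ℕ, ((A * Real.cos (2*π*k/n) + B * Real.sin (2*π*k/n) : ℝ) : ℂ)
      = ((A:ℂ) - B*Complex.I)/2 * ffc n (k:ℤ) + ((A:ℂ) + B*Complex.I)/2 * ffc n (-(k:ℤ)) := by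
    intro k
    rw [ffc_real, ffc_real_neg]
    have hI := Complex.I_sq
    push_cast
    linear_combination ((B:ℂ) * Complex.sin (2 * (π:ℂ) * (k:ℂ) / (n:ℂ))) * hI
  have expand : Fc n (fun k => A * Real.cos (2*π*k/n) + B * Real.sin (2*π*k/n)) j
      = ((A:ℂ) - B*Complex.I)/2 * (∑ k ∈ range n, ffc n (((j:ℤ)+1) * k))
        + ((A:ℂ) + B*Complex.I)/2 * (∑ k ∈ range n, ffc n (((j:ℤ)-1) * k)) := by
    rw [Fc, Finset.mul_sum, Finset.mul_sum, ← Finset.sum_add_distrib]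
    refine Finset.sum_congr rfl fun k _ => ?_
    rw [hsplit]
    rw [show (((j:ℤ)+1) * k) = (k:ℤ) + (j:ℤ)*(k:ℤ) by ring, ffc_add,
        show (((j:ℤ)-1) * k) = -(k:ℤ) + (j:ℤ)*(k:ℤ) by ring, ffc_add]
    ring
  rw [expand, ffc_orth n hn, ffc_orth n hn]
  have d1 : ((n:ℤ) ∣ ((j:ℤ)+1)) ↔ j = n - 1 := by
    constructor
    · intro h
      have h' : (n:ℤ) ∣ ((j:ℤ)+1-n) := (dvd_sub_right h).mpr dvd_rfl
      have := int_dvd_small n ((j:ℤ)+1-n) (by omega) (by omega) h'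
      omega
    · intro h
      refine ⟨1, ?_⟩
      omega
  have d2 : ((n:ℤ) ∣ ((j:ℤ)-1)) ↔ j = 1 := by
    constructor
    · intro h
      have := int_dvd_small n ((j:ℤ)-1) (by omega) (by omega) h
      omega
    · intro h
      simp [h]
  rcases eq_or_ne j 1 with rfl | hj1
  · have h1 : ¬ ((n:ℤ) ∣ ((1:ℕ):ℤ)+1) := fun h => absurd (d1.mp h) (by omega)
    have h2 : ((n:ℤ) ∣ ((1:ℕ):ℤ)-1) := d2.mpr rfl
    rw [if_neg h1, if_pos h2, if_pos rfl]
    ring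
  · rcases eq_or_ne j (n-1) with rfl | hj2
    · have h1 : ((n:ℤ) ∣ ((n-1:ℕ):ℤ)+1) := d1.mpr rfl
      have h2 : ¬ ((n:ℤ) ∣ ((n-1:ℕ):ℤ)-1) := fun h => hj1 (d2.mp h)
      rw [if_pos h1, if_neg h2, if_neg hj1, if_pos rfl]
      ring
    · rw [if_neg (fun h => hj2 (d1.mp h)), if_neg (fun h => hj1 (d2.mp h)),
        if_neg hj1, if_neg hj2]
      ring

lemma Fc_conj (n : ℕ) (hn : 0 < n) (φ : ℕ → ℝ) :
    Fc n φ (n-1) = (starRingEnd ℂ) (Fc n φ 1) := by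
  rw [Fc, Fc, map_sum]
  refine Finset.sum_congr rfl fun k hk => ?_
  have hone : ffc n ((k:ℤ) * (n:ℤ)) = 1 := (ffc_eq_one_iff n hn _).mpr ⟨k, by ring⟩
  have h1 : ((n-1 : ℕ) : ℤ) * k = -(((1:ℕ):ℤ)*(k:ℤ)) + ((k:ℤ) * (n:ℤ)) := by
    push_cast [Nat.cast_sub hn]
    ring
  rw [map_mul, Complex.conj_ofReal, conj_ffc, h1, ffc_add, hone, mul_one]

theorem discrete_wirtinger_equality (n : ℕ) (hn : 1 ≤ n) (ψ : ℕ → ℝ)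
    (hper : ψ 0 = ψ n) (hmean : ∑ k ∈ Finset.range n, ψ k = 0) :
    (∑ k ∈ Finset.range n, (ψ (k + 1) - ψ k) ^ 2 =
      4 * Real.sin (π / n) ^ 2 * ∑ k ∈ Finset.range n, (ψ k) ^ 2) ↔
    ∃ A B : ℝ, ∀ k ≤ n,
      ψ k = A * Real.cos (2 * π * k / n) + B * Real.sin (2 * π * k / n) := by
  -- small cases
  rcases Nat.lt_or_ge n 3 with hsmall | hn3
  · interval_cases n
    · -- n = 1
      have h0 : ψ 0 = 0 := by simpa using hmean
      have h1 : ψ 1 = 0 := by rw [← hper]; exact h0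
      constructor
      · intro _
        refine ⟨0, 0, fun k hk => ?_⟩
        interval_cases k <;> simp [h0, h1]
      · intro _
        norm_num [h0, h1, Real.sin_pi]
    · -- n = 2
      have hm : ψ 1 = -ψ 0 := by
        have := hmean
        simp [Finset.sum_range_succ] at this
        linarith
      have h2 : ψ 2 = ψ 0 := hper.symm
      constructor
      · intro _
        refine ⟨ψ 0, 0, fun k hk => ?_⟩
        interval_cases k
        · norm_num
        · rw [show 2 * π * ((1:ℕ):ℝ) / ((2:ℕ):ℝ) = π by push_cast; ring]
          rw [Real.cos_pi, Real.sin_pi]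
          rw [hm]; ring
        · rw [show 2 * π * ((2:ℕ):ℝ) / ((2:ℕ):ℝ) = 2*π by push_cast; ring]
          rw [Real.cos_two_pi, Real.sin_two_pi]
          rw [h2]; ring
      · intro _
        rw [show ((2:ℕ):ℝ) = 2 by norm_num]
        rw [Real.sin_pi_div_two]
        simp only [Finset.sum_range_succ, Finset.sum_range_zero]
        rw [h2, hm]
        ring
  · -- n ≥ 3
    have hn0 : 0 < n := by omega
    have hnR : (0:ℝ) < n := by exact_mod_cast hn0
    have hπn_pos : 0 < π / n := by positivity
    have hsin_pos : 0 < Real.sin (π/n) := by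
      apply Real.sin_pos_of_pos_of_lt_pi hπn_pos
      rw [div_lt_iff₀ hnR]
      have h1 : (1:ℝ) < n := by exact_mod_cast (by omega : 1 < n)
      nlinarith [Real.pi_pos]
    have E2 : ∑ j ∈ range n, Complex.normSq (Fc n ψ j) = n * ∑ k ∈ range n, (ψ k)^2 :=
      parseval n hn0 ψ
    have E1 : ∑ j ∈ range n, (4 * Real.sin (π * j / n)^2) * Complex.normSq (Fc n ψ j)
        = n * ∑ k ∈ range n, (ψ (k+1) - ψ k)^2 := by
      rw [← parseval n hn0 (fun k => ψ (k+1) - ψ k)]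
      refine Finset.sum_congr rfl fun j _ => ?_
      rw [shift n hn0 ψ hper j, Complex.normSq_mul, normSq_ffc_sub_one]
    have hF0 : Fc n ψ 0 = 0 := by
      rw [Fc]
      simp only [CharP.cast_eq_zero, zero_mul, ffc_zero, mul_one]
      exact_mod_cast hmean
    have hwn1 : Real.sin (π * ((n-1:ℕ):ℝ) / n) = Real.sin (π / n) := by
      have h : π * ((n-1:ℕ):ℝ) / n = π - π/n := by
        push_cast [Nat.cast_sub hn0]
        field_simp
      rw [h, Real.sin_pi_sub]
    constructor
    · -- forward direction
      intro heq
      have hsum0 : ∑ j ∈ range n,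
          ((4 * Real.sin (π * j / n)^2 - 4 * Real.sin (π/n)^2) * Complex.normSq (Fc n ψ j)) = 0 := by
        have hexp : ∀ j ∈ range n,
            (4 * Real.sin (π * j / n)^2 - 4 * Real.sin (π/n)^2) * Complex.normSq (Fc n ψ j)
            = (4 * Real.sin (π * j / n)^2) * Complex.normSq (Fc n ψ j)
              - 4 * Real.sin (π/n)^2 * Complex.normSq (Fc n ψ j) := fun j _ => by ring
        rw [Finset.sum_congr rfl hexp, Finset.sum_sub_distrib, E1, ← Finset.mul_sum, E2, heq]
        ring
      have hnonneg : ∀ j ∈ range n,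
          0 ≤ (4 * Real.sin (π * j / n)^2 - 4 * Real.sin (π/n)^2) * Complex.normSq (Fc n ψ j) := by
        intro j hj
        rcases Nat.eq_zero_or_pos j with rfl | hjpos
        · rw [hF0]
          simp
        · have hge : Real.sin (π/n) ≤ Real.sin (π * j / n) := by
            apply sin_ge_sin _ _ hπn_pos
            · rw [div_le_div_iff_of_pos_right hnR]
              have h1 : (1:ℝ) ≤ j := by exact_mod_cast hjpos
              nlinarith [Real.pi_pos]
            · rw [div_le_iff₀ hnR]
              have hc : π/n * n = π := div_mul_cancel₀ π hnR.ne'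
              have hjR : (j:ℝ) + 1 ≤ n := by exact_mod_cast (mem_range.mp hj)
              nlinarith [Real.pi_pos]
          apply mul_nonneg _ (Complex.normSq_nonneg _)
          nlinarith [hsin_pos, hge]
      have hterm := (Finset.sum_eq_zero_iff_of_nonneg hnonneg).mp hsum0
      have hFzero : ∀ j ∈ range n, j ≠ 1 → j ≠ n-1 → Fc n ψ j = 0 := by
        intro j hj hj1 hj2
        rcases Nat.eq_zero_or_pos j with rfl | hjpos
        · exact hF0
        · have hjge2 : 2 ≤ j := by omega
          have hj2n : j + 2 ≤ n := by have := mem_range.mp hj; omega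
          have hstrict : Real.sin (π/n) < Real.sin (π * j / n) := by
            apply sin_gt_sin _ _ hπn_pos
            · rw [div_lt_div_iff_of_pos_right hnR]
              have h1 : (2:ℝ) ≤ j := by exact_mod_cast hjge2
              nlinarith [Real.pi_pos]
            · rw [div_lt_iff₀ hnR]
              have hc : π/n * n = π := div_mul_cancel₀ π hnR.ne'
              have hjR : (j:ℝ) + 2 ≤ n := by exact_mod_cast hj2n
              nlinarith [Real.pi_pos]
          have ht := hterm j hj
          have hw : 0 < 4 * Real.sin (π * j / n)^2 - 4 * Real.sin (π/n)^2 := by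
            nlinarith [hsin_pos, hstrict]
          have hN : Complex.normSq (Fc n ψ j) = 0 := by
            rcases mul_eq_zero.mp ht with h | h
            · exact absurd h hw.ne'
            · exact h
          exact Complex.normSq_eq_zero.mp hN
      refine ⟨2 * (Fc n ψ 1).re / n, 2 * (Fc n ψ 1).im / n, ?_⟩
      set A := 2 * (Fc n ψ 1).re / n with hA
      set B := 2 * (Fc n ψ 1).im / n with hB
      have e2 : (n:ℝ)/2*A = (Fc n ψ 1).re := by rw [hA]; field_simp
      have e3 : (n:ℝ)/2*B = (Fc n ψ 1).im := by rw [hB]; field_simp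
      have hT1 : ((n:ℂ)/2) * ((A:ℂ) + (B:ℂ)*Complex.I) = Fc n ψ 1 := by
        have e1 : ((n:ℂ)/2) * ((A:ℂ) + (B:ℂ)*Complex.I)
            = (((n:ℝ)/2*A : ℝ):ℂ) + (((n:ℝ)/2*B : ℝ):ℂ)*Complex.I := by push_cast; ring
        rw [e1, e2, e3, Complex.re_add_im]
      have hT2 : ((n:ℂ)/2) * ((A:ℂ) - (B:ℂ)*Complex.I) = Fc n ψ (n-1) := by
        rw [Fc_conj n hn0 ψ]
        have e1 : ((n:ℂ)/2) * ((A:ℂ) - (B:ℂ)*Complex.I)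
            = (((n:ℝ)/2*A : ℝ):ℂ) - (((n:ℝ)/2*B : ℝ):ℂ)*Complex.I := by push_cast; ring
        rw [e1, e2, e3]
        apply Complex.ext <;> simp
      set φ : ℕ → ℝ := fun k => ψ k - (A * Real.cos (2*π*k/n) + B * Real.sin (2*π*k/n)) with hφ
      have hlin : ∀ j : ℕ, Fc n φ j
          = Fc n ψ j - Fc n (fun k => A * Real.cos (2*π*k/n) + B * Real.sin (2*π*k/n)) j := by
        intro j
        rw [Fc, Fc, Fc, ← Finset.sum_sub_distrib]
        refine Finset.sum_congr rfl fun k _ => ?_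
        simp only [hφ]
        push_cast
        ring
      have hφF : ∀ j ∈ range n, Fc n φ j = 0 := by
        intro j hj
        rw [hlin j, Fc_trig n hn3 A B j (mem_range.mp hj)]
        rcases eq_or_ne j 1 with rfl | hj1
        · rw [if_pos rfl, hT1]
          ring
        rcases eq_or_ne j (n-1) with rfl | hj2
        · rw [if_neg hj1, if_pos rfl, hT2]
          ring
        · rw [if_neg hj1, if_neg hj2, hFzero j hj hj1 hj2]
          ring
      have hpar := parseval n hn0 φ
      have hzero : ∑ k ∈ range n, (φ k)^2 = 0 := by
        have h0 : ∑ j ∈ range n, Complex.normSq (Fc n φ j) = 0 :=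
          Finset.sum_eq_zero fun j hj => by rw [hφF j hj]; simp
        rw [h0] at hpar
        rcases mul_eq_zero.mp hpar.symm with h | h
        · exact absurd h hnR.ne'
        · exact h
      have hφzero : ∀ k ∈ range n, φ k = 0 := by
        intro k hk
        have h := (Finset.sum_eq_zero_iff_of_nonneg (fun k _ => sq_nonneg (φ k))).mp hzero k hk
        exact sq_eq_zero_iff.mp h
      intro k hk
      by_cases hkn : k = n
      · subst hkn
        have h0 := hφzero 0 (mem_range.mpr hn0)
        simp only [hφ] at h0
        rw [show 2*π*((0:ℕ):ℝ)/k = 0 by norm_num, Real.cos_zero, Real.sin_zero] at h0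
        rw [show 2*π*(k:ℝ)/k = 2*π by rw [mul_div_assoc, div_self hnR.ne', mul_one]]
        rw [Real.cos_two_pi, Real.sin_two_pi]
        linarith [hper]
      · have hlt : k < n := by omega
        have h := hφzero k (mem_range.mpr hlt)
        simp only [hφ] at h
        linarith
    · -- backward direction
      rintro ⟨A, B, hAB⟩
      have hψT : ∀ j ∈ range n, Fc n ψ j
          = Fc n (fun k => A * Real.cos (2*π*k/n) + B * Real.sin (2*π*k/n)) j := by
        intro j _
        rw [Fc, Fc]
        exact Finset.sum_congr rfl fun k hk => by rw [hAB k (le_of_lt (mem_range.mp hk))]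
      have hkey : ∀ j ∈ range n, (4 * Real.sin (π * j / n)^2) * Complex.normSq (Fc n ψ j)
          = (4 * Real.sin (π / n)^2) * Complex.normSq (Fc n ψ j) := by
        intro j hj
        rcases eq_or_ne j 1 with rfl | hj1
        · rw [show π * ((1:ℕ):ℝ)/n = π/n by norm_num]
        rcases eq_or_ne j (n-1) with rfl | hj2
        · rw [hwn1]
        · rw [hψT j hj, Fc_trig n hn3 A B j (mem_range.mp hj), if_neg hj1, if_neg hj2]
          simp
      have hfin : (n:ℝ) * ∑ k ∈ range n, (ψ (k+1) - ψ k)^2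
          = (n:ℝ) * (4 * Real.sin (π/n)^2 * ∑ k ∈ range n, (ψ k)^2) := by
        rw [← E1, Finset.sum_congr rfl hkey, ← Finset.mul_sum, E2]
        ring
      exact mul_left_cancel₀ hnR.ne' hfin
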